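/- Let τ be a monoid congruence on 𝔄* such that the empty word 1 forms a singleton τ-class, and let W = [w]_τ be a single τ-class for some nonempty word w. Assume that for every monoid M, if W is stable with respect to M then every factor of every word of W is a τ-term for M. Define M_τ(W) as the quotient of 𝔄*/τ in which all τ-classes c for which there exist no τ-classes p, s with p·c·s = [w]_τ in 𝔄*/τ are identified to a single (zero) element, all other τ-classes remaining distinct (if every τ-class divides [w]_τ, set M_τ(W) = 𝔄*/τ). Then the monoids M_τ(W) and M_synt(W) satisfy exactly the same identities, i.e., they generate the same variety of monoids. -/

import Mathlib

/-- Words over the countably infinite alphabet `ℕ`. -/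
abbrev Word : Type := List ℕ

/-- A monoid `M` satisfies the identity `u ≈ v` if every substitution of letters by
elements of `M` (equivalently, every monoid homomorphism from the free monoid) equalizes
`u` and `v`. -/
def Satisfies (M : Type*) [Monoid M] (u v : Word) : Prop :=
  ∀ φ : ℕ → M, (u.map φ).prod = (v.map φ).prod

/-- A set of words `W` is stable with respect to a monoid `M`. -/
def Stable (W : Set Word) (M : Type*) [Monoid M] : Prop :=
  ∀ u v : Word, u ∈ W → Satisfies M u v → v ∈ W

/-- `u` is a `τ`-term for the monoid `M`. -/
def IsTerm (τ : Word → Word → Prop) (M : Type*) [Monoid M] (u : Word) : Prop :=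
  ∀ v : Word, Satisfies M u v → τ u v

/-- The set of simple letters of a word. -/
def simpSet (u : Word) : Set ℕ := {x | u.count x = 1}

/-- The set of multiple letters of a word. -/
def mulSet (u : Word) : Set ℕ := {x | 2 ≤ u.count x}

/-- The set of letters of a word. -/
def conSet (u : Word) : Set ℕ := {x | x ∈ u}

/-- The monoid congruence on the free monoid generated by the pairs `(a, a²)`. -/
inductive tau1 : Word → Word → Prop
  | base (a : ℕ) : tau1 [a] [a, a]
  | refl (u : Word) : tau1 u u
  | symm {u v : Word} : tau1 u v → tau1 v u
  | trans {u v x : Word} : tau1 u v → tau1 v x → tau1 u x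
  | append {u v u' v' : Word} : tau1 u v → tau1 u' v' → tau1 (u ++ u') (v ++ v')

/-- The relation γ. -/
def gamma (u v : Word) : Prop := simpSet u = simpSet v ∧ mulSet u = mulSet v

/-- The relation `τ₁ ∧ γ`. -/
def tau1gamma (u v : Word) : Prop := tau1 u v ∧ gamma u v

/-- A word is block-simple if every factor all of whose letters are multiple
(in particular, every block) involves at most one letter. -/
def BlockSimple (u : Word) : Prop :=
  ∀ p f s : Word, u = p ++ f ++ s → (∀ x ∈ f, x ∈ mulSet u) →
    ∀ x ∈ f, ∀ y ∈ f, x = y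

/-- `assemble m t A = A 0 ++ t 0 :: A 1 ++ t 1 :: ... ++ t (m-1) :: A m`:
the word with blocks `A i` separated by the letters `t i`. -/
def assemble (m : ℕ) (t : Fin m → ℕ) (A : Fin (m + 1) → Word) : Word :=
  A 0 ++ (List.ofFn fun i : Fin m => t i :: A i.succ).flatten

/-- Common core of the relations `β` and `∼_Q`: `u` and `v` decompose into blocks
separated by the same simple letters in the same order, corresponding blocks have the
same content; when `withOrder = true`, in corresponding blocks the order of first
occurrences of letters coincides. -/
def betaAux (withOrder : Bool) (u v : Word) : Prop :=
  ∃ (m : ℕ) (t : Fin m → ℕ) (A B : Fin (m + 1) → Word),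
    u = assemble m t A ∧ v = assemble m t B ∧
    (∀ i : Fin m, u.count (t i) = 1) ∧ (∀ i : Fin m, v.count (t i) = 1) ∧
    (∀ i : Fin (m + 1), ∀ x ∈ A i, x ∈ mulSet u) ∧
    (∀ i : Fin (m + 1), ∀ x ∈ B i, x ∈ mulSet v) ∧
    (∀ i : Fin (m + 1), ∀ x : ℕ, x ∈ A i ↔ x ∈ B i) ∧
    (withOrder = true → ∀ i : Fin (m + 1), ∀ x y : ℕ, x ∈ A i → y ∈ A i → x ≠ y →
      ((A i).idxOf x < (A i).idxOf y ↔ (B i).idxOf x < (B i).idxOf y))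

/-- The relation β. -/
def beta : Word → Word → Prop := betaAux true

/-- The relation `∼_Q` (β without the condition on the order of first occurrences). -/
def simQ : Word → Word → Prop := betaAux false

/-- The words `u_n` (letters: `a = 0`, `b = 1`, `t_k = k + 1`). -/
def uW : ℕ → Word
  | 0 => [0, 0, 1, 1]
  | k + 1 => (if k % 2 = 0 then 0 else 1) :: (k + 2) :: uW k

/-- The words `v_n` (letters: `a = 0`, `b = 1`, `t_k = k + 1`). -/
def vW : ℕ → Word
  | 0 => [1, 1, 0, 0]
  | k + 1 => (if k % 2 = 0 then 0 else 1) :: (k + 2) :: vW k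

/-- A monoid satisfies the identity system
`Σ_n = {xtx ≈ xtx², xtx ≈ x²tx, xy²x ≈ x²y², u_n ≈ v_n}`. -/
def SatSigma (n : ℕ) (N : Type*) [Monoid N] : Prop :=
  Satisfies N [0, 1, 0] [0, 1, 0, 0] ∧ Satisfies N [0, 1, 0] [0, 0, 1, 0] ∧
  Satisfies N [0, 1, 1, 0] [0, 0, 1, 1] ∧ Satisfies N (uW n) (vW n)

/-- A monoid is finitely based. -/
def FinBased (M : Type*) [Monoid M] : Prop :=
  ∃ S : Finset (Word × Word),
    (∀ p ∈ S, Satisfies M p.1 p.2) ∧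
    ∀ (N : Type) [Monoid N], (∀ p ∈ S, Satisfies N p.1 p.2) →
      ∀ u v : Word, Satisfies M u v → Satisfies N u v

/-- `U_n = x y₁² y₂² ⋯ y_n² x` (letters: `x = 0`, `y_i = i`). -/
def Uw (n : ℕ) : Word := 0 :: (((List.range n).map fun i => [i + 1, i + 1]).flatten ++ [0])

/-- `V_n = x y₁² x y₂² x ⋯ x y_n² x` (letters: `x = 0`, `y_i = i`). -/
def Vw (n : ℕ) : Word := 0 :: ((List.range n).map fun i => [i + 1, i + 1, 0]).flatten

/-- The language `a⁺bb⁺ta⁺ = {aⁱ bʲ t aᵏ : i, k ≥ 1, j ≥ 2}` (`a = 0`, `b = 1`, `t = 2`). -/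
def Lab : Set Word := {w | ∃ i j k : ℕ, 1 ≤ i ∧ 2 ≤ j ∧ 1 ≤ k ∧
  w = List.replicate i 0 ++ List.replicate j 1 ++ 2 :: List.replicate k 0}

/-- The β-class of `atb²a` as an explicit language:
`{aⁱ t bʲ a w : i ≥ 1, j ≥ 2} ∪ {aⁱ t bʲ aᵏ b w : i, j, k ≥ 1}`, `w ∈ {a,b}*`
(`a = 0`, `b = 1`, `t = 2`). -/
def LatBBa : Set Word :=
  {w | (∃ i j : ℕ, 1 ≤ i ∧ 2 ≤ j ∧ ∃ r : Word, (∀ x ∈ r, x = 0 ∨ x = 1) ∧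
      w = List.replicate i 0 ++ 2 :: (List.replicate j 1 ++ 0 :: r)) ∨
    (∃ i j k : ℕ, 1 ≤ i ∧ 1 ≤ j ∧ 1 ≤ k ∧ ∃ r : Word, (∀ x ∈ r, x = 0 ∨ x = 1) ∧
      w = List.replicate i 0 ++ 2 :: (List.replicate j 1 ++ (List.replicate k 0 ++ 1 :: r)))}

/-- `u` is a factor (subword) of `x`. -/
def IsFactorOf (u x : Word) : Prop := ∃ p s : Word, x = p ++ u ++ s

/-- The syntactic congruence of a language `W`. -/
def SyntCon (W : Set Word) : Con (FreeMonoid ℕ) where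
  r u v := ∀ p s : Word,
    p ++ FreeMonoid.toList u ++ s ∈ W ↔ p ++ FreeMonoid.toList v ++ s ∈ W
  iseqv := ⟨fun _ _ _ => Iff.rfl, fun h p s => (h p s).symm,
    fun h h' p s => (h p s).trans (h' p s)⟩
  mul' := by
    intro w x y z h h' p s
    have h1 := h p (FreeMonoid.toList y ++ s)
    have h2 := h' (p ++ FreeMonoid.toList x) s
    simp only [FreeMonoid.toList_mul, List.append_assoc] at h1 h2 ⊢
    exact h1.trans h2

/-- The syntactic monoid of a language `W`. -/
abbrev SyntMonoid (W : Set Word) : Type := (SyntCon W).Quotient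

/-! ### Concrete finite monoids -/

/-- The 7-element monoid `A¹`: identity `e1` adjoined to the semigroup `A = ⟨a,b,c ∣ a²=a, b²=b, ab=ca=0, ac=cb=c⟩ = {a,b,c,ba,bc,0}` (`z0` is the zero). -/
inductive A1M : Type
  | e1 | a | b | c | ba | bc | z0
deriving DecidableEq

/-- Multiplication of `A1M`. -/
def A1M.mul : A1M → A1M → A1M
  | .e1, .e1 => .e1
  | .e1, .a => .a
  | .e1, .b => .b
  | .e1, .c => .c
  | .e1, .ba => .ba
  | .e1, .bc => .bc
  | .e1, .z0 => .z0
  | .a, .e1 => .a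
  | .a, .a => .a
  | .a, .b => .z0
  | .a, .c => .c
  | .a, .ba => .z0
  | .a, .bc => .z0
  | .a, .z0 => .z0
  | .b, .e1 => .b
  | .b, .a => .ba
  | .b, .b => .b
  | .b, .c => .bc
  | .b, .ba => .ba
  | .b, .bc => .bc
  | .b, .z0 => .z0
  | .c, .e1 => .c
  | .c, .a => .z0
  | .c, .b => .c
  | .c, .c => .z0
  | .c, .ba => .z0
  | .c, .bc => .z0
  | .c, .z0 => .z0
  | .ba, .e1 => .ba
  | .ba, .a => .ba
  | .ba, .b => .z0
  | .ba, .c => .bc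
  | .ba, .ba => .z0
  | .ba, .bc => .z0
  | .ba, .z0 => .z0
  | .bc, .e1 => .bc
  | .bc, .a => .z0
  | .bc, .b => .bc
  | .bc, .c => .z0
  | .bc, .ba => .z0
  | .bc, .bc => .z0
  | .bc, .z0 => .z0
  | .z0, .e1 => .z0
  | .z0, .a => .z0
  | .z0, .b => .z0
  | .z0, .c => .z0
  | .z0, .ba => .z0
  | .z0, .bc => .z0
  | .z0, .z0 => .z0

instance : Monoid A1M where
  one := .e1
  mul := A1M.mul
  mul_assoc := by intro x y z; cases x <;> cases y <;> cases z <;> rfl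
  one_mul := by intro x; cases x <;> rfl
  mul_one := by intro x; cases x <;> rfl
/-- The 6-element monoid `E¹`: identity `e1` adjoined to the semigroup `E = ⟨a,b,c ∣ a²=ab=0, ba=ca=a, b²=bc=b, c²=cb=c⟩ = {a,b,c,ac,0}` (`z0` is the zero). -/
inductive E1M : Type
  | e1 | a | b | c | ac | z0
deriving DecidableEq

/-- Multiplication of `E1M`. -/
def E1M.mul : E1M → E1M → E1M
  | .e1, .e1 => .e1
  | .e1, .a => .a
  | .e1, .b => .b
  | .e1, .c => .c
  | .e1, .ac => .ac
  | .e1, .z0 => .z0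
  | .a, .e1 => .a
  | .a, .a => .z0
  | .a, .b => .z0
  | .a, .c => .ac
  | .a, .ac => .z0
  | .a, .z0 => .z0
  | .b, .e1 => .b
  | .b, .a => .a
  | .b, .b => .b
  | .b, .c => .b
  | .b, .ac => .ac
  | .b, .z0 => .z0
  | .c, .e1 => .c
  | .c, .a => .a
  | .c, .b => .c
  | .c, .c => .c
  | .c, .ac => .ac
  | .c, .z0 => .z0
  | .ac, .e1 => .ac
  | .ac, .a => .z0
  | .ac, .b => .ac
  | .ac, .c => .ac
  | .ac, .ac => .z0
  | .ac, .z0 => .z0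
  | .z0, .e1 => .z0
  | .z0, .a => .z0
  | .z0, .b => .z0
  | .z0, .c => .z0
  | .z0, .ac => .z0
  | .z0, .z0 => .z0

instance : Monoid E1M where
  one := .e1
  mul := E1M.mul
  mul_assoc := by intro x y z; cases x <;> cases y <;> cases z <;> rfl
  one_mul := by intro x; cases x <;> rfl
  mul_one := by intro x; cases x <;> rfl
/-- The 5-element monoid `A₀¹`: identity `e1` adjoined to the semigroup `A₀ = ⟨a,b ∣ a²=a, b²=b, ab=0⟩ = {a,b,ba,0}` (`z0` is the zero). -/
inductive A01M : Type
  | e1 | a | b | ba | z0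
deriving DecidableEq

/-- Multiplication of `A01M`. -/
def A01M.mul : A01M → A01M → A01M
  | .e1, .e1 => .e1
  | .e1, .a => .a
  | .e1, .b => .b
  | .e1, .ba => .ba
  | .e1, .z0 => .z0
  | .a, .e1 => .a
  | .a, .a => .a
  | .a, .b => .z0
  | .a, .ba => .z0
  | .a, .z0 => .z0
  | .b, .e1 => .b
  | .b, .a => .ba
  | .b, .b => .b
  | .b, .ba => .ba
  | .b, .z0 => .z0
  | .ba, .e1 => .ba
  | .ba, .a => .ba
  | .ba, .b => .z0
  | .ba, .ba => .z0
  | .ba, .z0 => .z0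
  | .z0, .e1 => .z0
  | .z0, .a => .z0
  | .z0, .b => .z0
  | .z0, .ba => .z0
  | .z0, .z0 => .z0

instance : Monoid A01M where
  one := .e1
  mul := A01M.mul
  mul_assoc := by intro x y z; cases x <;> cases y <;> cases z <;> rfl
  one_mul := by intro x; cases x <;> rfl
  mul_one := by intro x; cases x <;> rfl


/-- The 3-element monoid `L₂¹`: the two-element left-zero semigroup with identity adjoined. -/
inductive LZ1 : Type
  | e | a | b
deriving DecidableEq

instance : Fintype LZ1 := ⟨{.e, .a, .b}, by intro x; cases x <;> decide⟩

instance : Monoid LZ1 where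
  one := .e
  mul x y := match x with
    | .e => y
    | .a => .a
    | .b => .b
  mul_assoc := by decide
  one_mul := by decide
  mul_one := by decide

/-- The 3-element monoid `M(x) = {1, x, 0}` with `x·x = 0`. -/
inductive MX : Type
  | e | x | z
deriving DecidableEq

instance : Fintype MX := ⟨{.e, .x, .z}, by intro x; cases x <;> decide⟩

instance : Monoid MX where
  one := .e
  mul a b := match a, b with
    | .e, b => b
    | a, .e => a
    | _, _ => .z
  mul_assoc := by decide
  one_mul := by decide
  mul_one := by decide

private lemma aux_mkprod (c : Con (FreeMonoid ℕ)) (m : ℕ → FreeMonoid ℕ) (u : Word) :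
    (u.map fun x => c.mk' (m x)).prod = c.mk' ((u.map m).prod) := by
  rw [MonoidHom.map_list_prod, List.map_map]; rfl

private lemma aux_single (z : Word) :
    (z.map fun x => FreeMonoid.ofList [x]).prod = FreeMonoid.ofList z := by
  induction z with
  | nil => rfl
  | cons a z ih => simp only [List.map_cons, List.prod_cons, ih]; rfl

private lemma aux_ofList_flatten (m : ℕ → FreeMonoid ℕ) (u : Word) :
    FreeMonoid.ofList ((u.map fun x => FreeMonoid.toList (m x)).flatten) = (u.map m).prod := by
  induction u with
  | nil => rfl
  | cons a u ih => simp only [List.map_cons, List.flatten_cons, List.prod_cons, ← ih]; rfl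

private lemma aux_subst {M : Type*} [Monoid M] {u v : Word} (g : ℕ → Word)
    (h : Satisfies M u v) : Satisfies M ((u.map g).flatten) ((v.map g).flatten) := by
  intro ψ
  have key : ∀ z : Word, (((z.map g).flatten).map ψ).prod
      = (z.map fun x => ((g x).map ψ).prod).prod := by
    intro z; induction z <;> simp_all
  rw [key, key]; exact h _

private lemma aux_stable (W : Set Word) : Stable W (SyntMonoid W) := by
  intro u' v' hu hsat
  have h := hsat fun x => (SyntCon W).mk' (FreeMonoid.ofList [x])
  rw [aux_mkprod, aux_mkprod, aux_single, aux_single] at h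
  have hrel := (Con.eq _).mp h
  have h2 := hrel [] []
  simpa using h2.mp (by simpa using hu)

theorem stmt13 (τ : Con (FreeMonoid ℕ))
    (hone : ∀ u : FreeMonoid ℕ, τ 1 u → u = 1)
    (w : Word) (hw : w ≠ [])
    (W : Set Word) (hWdef : W = {v : Word | τ (FreeMonoid.ofList w) (FreeMonoid.ofList v)})
    (hterm : ∀ (M : Type) [Monoid M], Stable W M →
      ∀ f : Word, (∃ x ∈ W, IsFactorOf f x) →
        IsTerm (fun u v => τ (FreeMonoid.ofList u) (FreeMonoid.ofList v)) M f)
    (ρ : Con (FreeMonoid ℕ))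
    (hρ : ∀ u v : FreeMonoid ℕ, ρ u v ↔ (τ u v ∨
      ((¬ ∃ p s : FreeMonoid ℕ, τ (p * u * s) (FreeMonoid.ofList w)) ∧
       (¬ ∃ p s : FreeMonoid ℕ, τ (p * v * s) (FreeMonoid.ofList w))))) :
    ∀ u v : Word, Satisfies ρ.Quotient u v ↔ Satisfies (SyntMonoid W) u v := by
  intro u v
  constructor
  · -- ρ.Quotient satisfies ⇒ syntactic monoid satisfies
    intro h φ
    choose m hm using fun x => Con.mk'_surjective (φ x)
    have h2 := h fun x => ρ.mk' (m x)
    rw [aux_mkprod, aux_mkprod] at h2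
    have hr : ρ ((u.map m).prod) ((v.map m).prod) := (Con.eq _).mp h2
    have hs : SyntCon W ((u.map m).prod) ((v.map m).prod) := by
      intro p s
      rcases (hρ _ _).mp hr with ht | ⟨h1, h2'⟩
      · have hmul : τ (FreeMonoid.ofList p * (u.map m).prod * FreeMonoid.ofList s)
            (FreeMonoid.ofList p * (v.map m).prod * FreeMonoid.ofList s) :=
          τ.mul (τ.mul (τ.refl _) ht) (τ.refl _)
        rw [hWdef]
        constructor
        · intro hx; exact τ.trans hx hmul
        · intro hx; exact τ.trans hx (τ.symm hmul)
      · rw [hWdef]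
        constructor
        · intro hx; exact absurd ⟨FreeMonoid.ofList p, FreeMonoid.ofList s, τ.symm hx⟩ h1
        · intro hx; exact absurd ⟨FreeMonoid.ofList p, FreeMonoid.ofList s, τ.symm hx⟩ h2'
    have hφ : φ = fun x => (SyntCon W).mk' (m x) := funext fun x => (hm x).symm
    rw [hφ, aux_mkprod, aux_mkprod]
    exact (Con.eq _).mpr hs
  · -- syntactic monoid satisfies ⇒ ρ.Quotient satisfies
    intro h φ
    choose m hm using fun x => Con.mk'_surjective (φ x)
    set g : ℕ → Word := fun x => FreeMonoid.toList (m x) with hg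
    have hoflu : FreeMonoid.ofList ((u.map g).flatten) = (u.map m).prod :=
      aux_ofList_flatten m u
    have hoflv : FreeMonoid.ofList ((v.map g).flatten) = (v.map m).prod :=
      aux_ofList_flatten m v
    have hsub : Satisfies (SyntMonoid W) ((u.map g).flatten) ((v.map g).flatten) :=
      aux_subst g h
    have key : ρ ((u.map m).prod) ((v.map m).prod) := by
      rw [hρ]
      by_cases hu' : ∃ p s : FreeMonoid ℕ,
          τ (p * (u.map m).prod * s) (FreeMonoid.ofList w)
      · left
        obtain ⟨p, s, hps⟩ := hu'
        have hxW : (FreeMonoid.toList p ++ (u.map g).flatten ++ FreeMonoid.toList s) ∈ W := by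
          rw [hWdef]
          have he : FreeMonoid.ofList
              (FreeMonoid.toList p ++ (u.map g).flatten ++ FreeMonoid.toList s)
              = p * (u.map m).prod * s := by rw [← hoflu]; rfl
          show τ (FreeMonoid.ofList w) _
          rw [he]; exact τ.symm hps
        have ht := hterm (SyntMonoid W) (aux_stable W) ((u.map g).flatten)
          ⟨_, hxW, ⟨FreeMonoid.toList p, FreeMonoid.toList s, rfl⟩⟩
          ((v.map g).flatten) hsub
        rw [← hoflu, ← hoflv]
        exact ht
      · by_cases hv' : ∃ p s : FreeMonoid ℕ,
            τ (p * (v.map m).prod * s) (FreeMonoid.ofList w)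
        · left
          obtain ⟨p, s, hps⟩ := hv'
          have hxW : (FreeMonoid.toList p ++ (v.map g).flatten ++ FreeMonoid.toList s) ∈ W := by
            rw [hWdef]
            have he : FreeMonoid.ofList
                (FreeMonoid.toList p ++ (v.map g).flatten ++ FreeMonoid.toList s)
                = p * (v.map m).prod * s := by rw [← hoflv]; rfl
            show τ (FreeMonoid.ofList w) _
            rw [he]; exact τ.symm hps
          have ht := hterm (SyntMonoid W) (aux_stable W) ((v.map g).flatten)
            ⟨_, hxW, ⟨FreeMonoid.toList p, FreeMonoid.toList s, rfl⟩⟩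
            ((u.map g).flatten) (fun ψ => (hsub ψ).symm)
          rw [← hoflu, ← hoflv]
          exact τ.symm ht
        · exact Or.inr ⟨hu', hv'⟩
    have hφ : φ = fun x => ρ.mk' (m x) := funext fun x => (hm x).symm
    rw [hφ, aux_mkprod, aux_mkprod]
    exact (Con.eq _).mpr key
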